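/- Let (Ω,F,μ) be a probability space with filtration (F_n), v a weight, and 1 < p < ∞. Suppose for each n and each B ∈ F_n and measurable f, g the inequality λ^p ∫_{B ∩ {|E_n f · E_n g| > λ}} v dμ ≤ C (∫_B |f|^{p₁} ω₁ dμ)^{p/p₁} (∫_B |g|^{p₂} ω₂ dμ)^{p/p₂} holds for all λ > 0, where 1/p = 1/p₁+1/p₂. Then ∫_Ω |E_n f · E_n g|^p v dμ ≤ C' (∫_Ω |f|^{p₁} ω₁ dμ)^{p/p₁} (∫_Ω |g|^{p₂} ω₂ dμ)^{p/p₂}, with C' depending only on C and p (via summation over the level sets B_k = {2^k < |E_n f·E_n g| ≤ 2^{k+1}} and Hölder's inequality for sums). -/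

import Mathlib

open MeasureTheory Filter ENNReal

noncomputable section

lemma aux_ae_zero_18 {Ω : Type*} {m0 : MeasurableSpace Ω} {μ : Measure Ω}
    {F : Ω → ℝ} (hF : ∀ x, 0 ≤ F x)
    (h : ∀ lam : ℝ, 0 < lam → μ {x | lam < F x} = 0) :
    F =ᵐ[μ] 0 := by
  have hsub : {x | F x ≠ 0} ⊆ ⋃ m : ℕ, {x | (1 : ℝ)/(m+1) < F x} := by
    intro x hx
    have hFx : 0 < F x := lt_of_le_of_ne (hF x) (Ne.symm hx)
    obtain ⟨m, hm⟩ := exists_nat_one_div_lt hFx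
    exact Set.mem_iUnion.2 ⟨m, hm⟩
  have h0 : μ {x | F x ≠ 0} = 0 :=
    measure_mono_null hsub (measure_iUnion_null fun m => h _ (by positivity))
  simpa [Filter.EventuallyEq, ae_iff] using h0

theorem stmt_18
    {Ω : Type*} {m0 : MeasurableSpace Ω} {μ : Measure Ω} [IsProbabilityMeasure μ]
    (ℱ : Filtration ℕ m0)
    (v ω₁ ω₂ : Ω → ℝ)
    (hv : ∀ x, 0 < v x) (hω₁ : ∀ x, 0 < ω₁ x) (hω₂ : ∀ x, 0 < ω₂ x)
    (hvI : Integrable v μ) (hω₁I : Integrable ω₁ μ) (hω₂I : Integrable ω₂ μ)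
    (p p₁ p₂ C : ℝ) (hp : 1 < p) (hp₁ : 1 < p₁) (hp₂ : 1 < p₂)
    (hpp : 1 / p = 1 / p₁ + 1 / p₂) (hC : 0 < C)
    (n : ℕ)
    (H : ∀ B : Set Ω, MeasurableSet[ℱ n] B →
      ∀ f g : Ω → ℝ, Integrable f μ → Integrable g μ →
      ∀ lam : ℝ, 0 < lam →
        lam ^ p * ∫ x in B ∩ {x | lam < |(μ[f|ℱ n]) x * (μ[g|ℱ n]) x|}, v x ∂μ
          ≤ C * (∫ x in B, |f x| ^ p₁ * ω₁ x ∂μ) ^ (p / p₁)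
              * (∫ x in B, |g x| ^ p₂ * ω₂ x ∂μ) ^ (p / p₂)) :
    ∃ C' : ℝ, 0 < C' ∧
      ∀ f g : Ω → ℝ, Integrable f μ → Integrable g μ →
        ∫ x, |(μ[f|ℱ n]) x * (μ[g|ℱ n]) x| ^ p * v x ∂μ
          ≤ C' * (∫ x, |f x| ^ p₁ * ω₁ x ∂μ) ^ (p / p₁)
              * (∫ x, |g x| ^ p₂ * ω₂ x ∂μ) ^ (p / p₂) := by
  have hp0 : (0:ℝ) < p := lt_trans zero_lt_one hp
  have hp₁0 : (0:ℝ) < p₁ := lt_trans zero_lt_one hp₁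
  have hp₂0 : (0:ℝ) < p₂ := lt_trans zero_lt_one hp₂
  have hpne : p ≠ 0 := ne_of_gt hp0
  have he₁ : (0:ℝ) < p / p₁ := div_pos hp0 hp₁0
  have he₂ : (0:ℝ) < p / p₂ := div_pos hp0 hp₂0
  have hC'pos : (0:ℝ) < (2:ℝ) ^ p * C :=
    mul_pos (Real.rpow_pos_of_pos two_pos p) hC
  refine ⟨(2:ℝ) ^ p * C, hC'pos, ?_⟩
  intro f g hf hg
  -- notation
  set F : Ω → ℝ := fun x => |(μ[f|ℱ n]) x * (μ[g|ℱ n]) x| with hFdef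
  have hFx : ∀ x, |(μ[f|ℱ n]) x * (μ[g|ℱ n]) x| = F x := fun x => rfl
  simp only [hFx]
  have hFnonneg : ∀ x, 0 ≤ F x := fun x => abs_nonneg _
  have hFℱ : Measurable[ℱ n] F := by
    have h1 : StronglyMeasurable[ℱ n] (μ[f|ℱ n]) := stronglyMeasurable_condExp
    have h2 : StronglyMeasurable[ℱ n] (μ[g|ℱ n]) := stronglyMeasurable_condExp
    exact continuous_abs.measurable.comp (h1.measurable.mul h2.measurable)
  have hFm : Measurable F := hFℱ.mono (ℱ.le n) le_rfl
  have hInt1nonneg : (0:ℝ) ≤ ∫ x, |f x| ^ p₁ * ω₁ x ∂μ :=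
    integral_nonneg fun x => mul_nonneg (Real.rpow_nonneg (abs_nonneg _) _) (hω₁ x).le
  have hInt2nonneg : (0:ℝ) ≤ ∫ x, |g x| ^ p₂ * ω₂ x ∂μ :=
    integral_nonneg fun x => mul_nonneg (Real.rpow_nonneg (abs_nonneg _) _) (hω₂ x).le
  by_cases hint : Integrable (fun x => |f x| ^ p₁ * ω₁ x) μ ∧
      Integrable (fun x => |g x| ^ p₂ * ω₂ x) μ
  swap
  · -- degenerate case: one of the right-hand integrals is undefined (hence 0 by convention);
    -- the weak-type hypothesis then forces F = 0 a.e.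
    have hzero : C * (∫ x, |f x| ^ p₁ * ω₁ x ∂μ) ^ (p / p₁)
        * (∫ x, |g x| ^ p₂ * ω₂ x ∂μ) ^ (p / p₂) = 0 := by
      rcases not_and_or.1 hint with h1 | h1
      · rw [integral_undef h1, Real.zero_rpow (ne_of_gt he₁), mul_zero, zero_mul]
      · rw [integral_undef h1, Real.zero_rpow (ne_of_gt he₂), mul_zero]
    have hmu : ∀ lam : ℝ, 0 < lam → μ {x | lam < F x} = 0 := by
      intro lam hlam
      have Hu := H Set.univ MeasurableSet.univ f g hf hg lam hlam
      simp only [hFx, Set.univ_inter, Measure.restrict_univ] at Hu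
      rw [hzero] at Hu
      have hlp : (0:ℝ) < lam ^ p := Real.rpow_pos_of_pos hlam p
      have hSv : ∫ x in {x | lam < F x}, v x ∂μ ≤ 0 := by nlinarith
      by_contra hne
      have hpos : 0 < μ {x | lam < F x} := pos_iff_ne_zero.2 hne
      have hvpos : 0 < ∫ x in {x | lam < F x}, v x ∂μ := by
        rw [setIntegral_pos_iff_support_of_nonneg_ae
          (ae_of_all _ fun x => (hv x).le) hvI.integrableOn]
        have hsupp : Function.support v ∩ {x | lam < F x} = {x | lam < F x} := by
          ext x
          simp [Function.support, (hv x).ne']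
        rw [hsupp]
        exact hpos
      linarith
    have hF0 : F =ᵐ[μ] 0 := aux_ae_zero_18 hFnonneg hmu
    have hint0 : (fun x => F x ^ p * v x) =ᵐ[μ] 0 := by
      filter_upwards [hF0] with x hx
      simp [hx, Real.zero_rpow hpne]
    have hRHS : (2:ℝ) ^ p * C * (∫ x, |f x| ^ p₁ * ω₁ x ∂μ) ^ (p / p₁)
        * (∫ x, |g x| ^ p₂ * ω₂ x ∂μ) ^ (p / p₂)
        = (2:ℝ) ^ p * (C * (∫ x, |f x| ^ p₁ * ω₁ x ∂μ) ^ (p / p₁)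
        * (∫ x, |g x| ^ p₂ * ω₂ x ∂μ) ^ (p / p₂)) := by ring
    rw [integral_congr_ae hint0]
    simp only [Pi.zero_apply, integral_zero]
    rw [hRHS, hzero, mul_zero]
  · obtain ⟨h₁, h₂⟩ := hint
    set a := ∫ x, |f x| ^ p₁ * ω₁ x ∂μ with hadef
    set b := ∫ x, |g x| ^ p₂ * ω₂ x ∂μ with hbdef
    -- exponent arithmetic
    have hsum : p / p₁ + p / p₂ = 1 := by
      have h' : p * (1/p₁) + p * (1/p₂) = p * (1/p) := by rw [← mul_add, ← hpp]
      rw [mul_one_div, mul_one_div, mul_one_div, div_self hpne] at h'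
      exact h'
    have hplt : p < p₁ := by
      have h1 : 1/p₁ < 1/p := by
        rw [hpp]
        have := one_div_pos.2 hp₂0
        linarith
      exact lt_of_one_div_lt_one_div hp₁0 h1
    have hconj : Real.HolderConjugate (p₁/p) (p₂/p) := by
      constructor
      · rw [inv_div, inv_div, inv_one]
        exact hsum
      · exact div_pos hp₁0 hp0
      · exact div_pos hp₂0 hp0
    -- the main objects
    set G : Ω → ℝ≥0∞ := fun x => ENNReal.ofReal (F x ^ p * v x) with hGdef
    set Φf : Ω → ℝ≥0∞ := fun x => ENNReal.ofReal (|f x| ^ p₁ * ω₁ x) with hΦfdef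
    set Φg : Ω → ℝ≥0∞ := fun x => ENNReal.ofReal (|g x| ^ p₂ * ω₂ x) with hΦgdef
    have hΦfnn : ∀ x, (0:ℝ) ≤ |f x| ^ p₁ * ω₁ x :=
      fun x => mul_nonneg (Real.rpow_nonneg (abs_nonneg _) _) (hω₁ x).le
    have hΦgnn : ∀ x, (0:ℝ) ≤ |g x| ^ p₂ * ω₂ x :=
      fun x => mul_nonneg (Real.rpow_nonneg (abs_nonneg _) _) (hω₂ x).le
    have hLHS_eq : ∫ x, F x ^ p * v x ∂μ = (∫⁻ x, G x ∂μ).toReal := by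
      refine integral_eq_lintegral_of_nonneg_ae (ae_of_all _ fun x =>
        mul_nonneg (Real.rpow_nonneg (hFnonneg x) _) (hv x).le) ?_
      exact (((Real.continuous_rpow_const hp0.le).measurable.comp hFm).aestronglyMeasurable).mul
        hvI.1
    -- the dyadic level sets
    set S : ℤ → Set Ω := fun k => F ⁻¹' Set.Ioc ((2:ℝ)^k) ((2:ℝ)^(k+1)) with hSdef
    have hSℱ : ∀ k, MeasurableSet[ℱ n] (S k) := fun k => hFℱ measurableSet_Ioc
    have hSm : ∀ k, MeasurableSet (S k) := fun k => ℱ.le n _ (hSℱ k)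
    have hdisj : Pairwise (Function.onFun Disjoint S) := by
      have key : ∀ i j : ℤ, i < j → Disjoint (S i) (S j) := by
        intro i j hij
        rw [Set.disjoint_left]
        rintro x ⟨_, hx2⟩ ⟨hx3, _⟩
        have h2 : ((2:ℝ)^(i+1)) ≤ (2:ℝ)^j := by
          apply zpow_le_zpow_right₀ one_le_two
          omega
        linarith
      intro i j hij
      rcases hij.lt_or_gt with h | h
      · exact key _ _ h
      · exact (key _ _ h).symm
    have hcover : {x | 0 < F x} = ⋃ k, S k := by
      ext x
      simp only [Set.mem_setOf_eq, Set.mem_iUnion, hSdef, Set.mem_preimage, Set.mem_Ioc]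
      constructor
      · intro hx
        exact _root_.exists_mem_Ioc_zpow hx one_lt_two
      · rintro ⟨k, hk1, _⟩
        exact lt_trans (by positivity) hk1
    have hs : MeasurableSet {x | 0 < F x} := measurableSet_lt measurable_const hFm
    have hzeroset : ∫⁻ x in {x | 0 < F x}ᶜ, G x ∂μ = 0 := by
      have hG0 : ∀ᵐ x ∂(μ.restrict {x | 0 < F x}ᶜ), G x = 0 := by
        refine (ae_restrict_iff' hs.compl).2 (ae_of_all _ ?_)
        intro x hx
        have hx0 : F x = 0 := le_antisymm (not_lt.1 hx) (hFnonneg x)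
        simp [hGdef, hx0, Real.zero_rpow hpne]
      rw [lintegral_congr_ae hG0, lintegral_zero]
    have hLsplit : ∫⁻ x, G x ∂μ = ∑' k : ℤ, ∫⁻ x in S k, G x ∂μ := by
      calc ∫⁻ x, G x ∂μ
          = ∫⁻ x in {x | 0 < F x}, G x ∂μ + ∫⁻ x in {x | 0 < F x}ᶜ, G x ∂μ :=
            (lintegral_add_compl G hs).symm
        _ = ∫⁻ x in ⋃ k, S k, G x ∂μ := by rw [hzeroset, add_zero, hcover]
        _ = ∑' k : ℤ, ∫⁻ x in S k, G x ∂μ := lintegral_iUnion hSm hdisj G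
    -- per-level bound
    set D : ℝ≥0∞ := ENNReal.ofReal ((2:ℝ)^p * C) with hDdef
    have hk_bound : ∀ k : ℤ, ∫⁻ x in S k, G x ∂μ ≤
        D * ((∫⁻ x in S k, Φf x ∂μ) ^ (p/p₁) * (∫⁻ x in S k, Φg x ∂μ) ^ (p/p₂)) := by
      intro k
      have hlamk : (0:ℝ) < (2:ℝ)^k := by positivity
      have Hk := H (S k) (hSℱ k) f g hf hg ((2:ℝ)^k) hlamk
      simp only [hFx] at Hk
      have hinter : S k ∩ {x | (2:ℝ)^k < F x} = S k := by
        apply Set.inter_eq_self_of_subset_left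
        intro x hx
        exact hx.1
      rw [hinter] at Hk
      set ak := ∫ x in S k, |f x| ^ p₁ * ω₁ x ∂μ with hakdef
      set bk := ∫ x in S k, |g x| ^ p₂ * ω₂ x ∂μ with hbkdef
      set vk := ∫ x in S k, v x ∂μ with hvkdef
      have hak0 : 0 ≤ ak := integral_nonneg fun x => hΦfnn x
      have hbk0 : 0 ≤ bk := integral_nonneg fun x => hΦgnn x
      have hvk0 : 0 ≤ vk := integral_nonneg fun x => (hv x).le
      have hAk : ENNReal.ofReal ak = ∫⁻ x in S k, Φf x ∂μ :=
        ofReal_integral_eq_lintegral_ofReal h₁.integrableOn (ae_of_all _ fun x => hΦfnn x)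
      have hBk : ENNReal.ofReal bk = ∫⁻ x in S k, Φg x ∂μ :=
        ofReal_integral_eq_lintegral_ofReal h₂.integrableOn (ae_of_all _ fun x => hΦgnn x)
      have hcnn : (0:ℝ) ≤ ((2:ℝ)^(k+1)) ^ p := Real.rpow_nonneg (by positivity) _
      have step1 : ∫⁻ x in S k, G x ∂μ
          ≤ ∫⁻ x in S k, ENNReal.ofReal (((2:ℝ)^(k+1)) ^ p * v x) ∂μ := by
        refine lintegral_mono_ae ((ae_restrict_iff' (hSm k)).2 (ae_of_all _ ?_))
        intro x hx
        refine ENNReal.ofReal_le_ofReal (mul_le_mul_of_nonneg_right ?_ (hv x).le)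
        exact Real.rpow_le_rpow (hFnonneg x) hx.2 hp0.le
      have step2 : ∫⁻ x in S k, ENNReal.ofReal (((2:ℝ)^(k+1)) ^ p * v x) ∂μ
          = ENNReal.ofReal (((2:ℝ)^(k+1)) ^ p * vk) := by
        have hme : AEMeasurable (fun x => ENNReal.ofReal (v x)) (μ.restrict (S k)) :=
          ENNReal.measurable_ofReal.comp_aemeasurable hvI.1.aemeasurable.restrict
        simp_rw [ENNReal.ofReal_mul hcnn]
        rw [lintegral_const_mul'' _ hme,
          ← ofReal_integral_eq_lintegral_ofReal hvI.integrableOn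
            (ae_of_all _ fun x => (hv x).le),
          ← ENNReal.ofReal_mul hcnn]
      have hreal : ((2:ℝ)^(k+1)) ^ p * vk
          ≤ (2:ℝ)^p * (C * ak ^ (p/p₁) * bk ^ (p/p₂)) := by
        have h2 : ((2:ℝ)^(k+1)) ^ p = (2:ℝ)^p * ((2:ℝ)^k) ^ p := by
          rw [zpow_add_one₀ (two_ne_zero), Real.mul_rpow (by positivity) (by norm_num)]
          ring
        rw [h2, mul_assoc]
        exact mul_le_mul_of_nonneg_left Hk (Real.rpow_nonneg (by norm_num) p)
      calc ∫⁻ x in S k, G x ∂μ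
          ≤ ENNReal.ofReal (((2:ℝ)^(k+1)) ^ p * vk) := step1.trans (le_of_eq step2)
        _ ≤ ENNReal.ofReal ((2:ℝ)^p * (C * ak ^ (p/p₁) * bk ^ (p/p₂))) :=
            ENNReal.ofReal_le_ofReal hreal
        _ = D * (ENNReal.ofReal (ak ^ (p/p₁)) * ENNReal.ofReal (bk ^ (p/p₂))) := by
            rw [show (2:ℝ)^p * (C * ak ^ (p/p₁) * bk ^ (p/p₂))
                = ((2:ℝ)^p * C) * (ak ^ (p/p₁) * (bk ^ (p/p₂))) by ring,
              ENNReal.ofReal_mul (mul_nonneg (Real.rpow_nonneg (by norm_num) p) hC.le),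
              ENNReal.ofReal_mul (Real.rpow_nonneg hak0 _)]
        _ = D * ((∫⁻ x in S k, Φf x ∂μ) ^ (p/p₁) * (∫⁻ x in S k, Φg x ∂μ) ^ (p/p₂)) := by
            rw [← ENNReal.ofReal_rpow_of_nonneg hak0 he₁.le,
              ← ENNReal.ofReal_rpow_of_nonneg hbk0 he₂.le, hAk, hBk]
    -- Hölder for the sums
    have hexp1 : ∀ X : ℝ≥0∞, (X ^ (p/p₁)) ^ (p₁/p) = X := by
      intro X
      rw [← ENNReal.rpow_mul]
      rw [show (p/p₁) * (p₁/p) = 1 by field_simp, ENNReal.rpow_one]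
    have hexp2 : ∀ X : ℝ≥0∞, (X ^ (p/p₂)) ^ (p₂/p) = X := by
      intro X
      rw [← ENNReal.rpow_mul]
      rw [show (p/p₂) * (p₂/p) = 1 by field_simp, ENNReal.rpow_one]
    have hholder : ∑' k : ℤ, ((∫⁻ x in S k, Φf x ∂μ) ^ (p/p₁) * (∫⁻ x in S k, Φg x ∂μ) ^ (p/p₂))
        ≤ (∑' k : ℤ, ∫⁻ x in S k, Φf x ∂μ) ^ (p/p₁)
            * (∑' k : ℤ, ∫⁻ x in S k, Φg x ∂μ) ^ (p/p₂) := by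
      have hH := ENNReal.lintegral_mul_le_Lp_mul_Lq (Measure.count : Measure ℤ) hconj
        (f := fun k => (∫⁻ x in S k, Φf x ∂μ) ^ (p/p₁))
        (g := fun k => (∫⁻ x in S k, Φg x ∂μ) ^ (p/p₂))
        (measurable_of_countable _).aemeasurable (measurable_of_countable _).aemeasurable
      simp only [Pi.mul_apply, lintegral_count, hexp1, hexp2, one_div_div] at hH
      exact hH
    have hSumf : ∑' k : ℤ, ∫⁻ x in S k, Φf x ∂μ ≤ ENNReal.ofReal a := by
      rw [← lintegral_iUnion hSm hdisj Φf,
        ofReal_integral_eq_lintegral_ofReal h₁ (ae_of_all _ fun x => hΦfnn x)]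
      exact setLIntegral_le_lintegral _ _
    have hSumg : ∑' k : ℤ, ∫⁻ x in S k, Φg x ∂μ ≤ ENNReal.ofReal b := by
      rw [← lintegral_iUnion hSm hdisj Φg,
        ofReal_integral_eq_lintegral_ofReal h₂ (ae_of_all _ fun x => hΦgnn x)]
      exact setLIntegral_le_lintegral _ _
    -- put everything together
    have hmain : ∫⁻ x, G x ∂μ
        ≤ ENNReal.ofReal ((2:ℝ)^p * C * a ^ (p/p₁) * b ^ (p/p₂)) := by
      calc ∫⁻ x, G x ∂μ = ∑' k : ℤ, ∫⁻ x in S k, G x ∂μ := hLsplit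
        _ ≤ ∑' k : ℤ, D * ((∫⁻ x in S k, Φf x ∂μ) ^ (p/p₁)
              * (∫⁻ x in S k, Φg x ∂μ) ^ (p/p₂)) := ENNReal.tsum_le_tsum hk_bound
        _ = D * ∑' k : ℤ, ((∫⁻ x in S k, Φf x ∂μ) ^ (p/p₁)
              * (∫⁻ x in S k, Φg x ∂μ) ^ (p/p₂)) := ENNReal.tsum_mul_left
        _ ≤ D * ((∑' k : ℤ, ∫⁻ x in S k, Φf x ∂μ) ^ (p/p₁)
              * (∑' k : ℤ, ∫⁻ x in S k, Φg x ∂μ) ^ (p/p₂)) := mul_le_mul_right hholder _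
        _ ≤ D * ((ENNReal.ofReal a) ^ (p/p₁) * (ENNReal.ofReal b) ^ (p/p₂)) := by
            exact mul_le_mul_right (mul_le_mul' (ENNReal.rpow_le_rpow hSumf he₁.le)
              (ENNReal.rpow_le_rpow hSumg he₂.le)) _
        _ = ENNReal.ofReal ((2:ℝ)^p * C * a ^ (p/p₁) * b ^ (p/p₂)) := by
            rw [hDdef, ENNReal.ofReal_rpow_of_nonneg hInt1nonneg he₁.le,
              ENNReal.ofReal_rpow_of_nonneg hInt2nonneg he₂.le,
              ← ENNReal.ofReal_mul (Real.rpow_nonneg hInt1nonneg _),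
              ← ENNReal.ofReal_mul (mul_nonneg (Real.rpow_nonneg (by norm_num) p) hC.le),
              mul_assoc]
            congr 1
            ring
    rw [hLHS_eq]
    refine ENNReal.toReal_le_of_le_ofReal ?_ ?_
    · exact mul_nonneg (mul_nonneg hC'pos.le (Real.rpow_nonneg hInt1nonneg _))
        (Real.rpow_nonneg hInt2nonneg _)
    · exact hmain

end
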